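/- The function A is differentiable with A'(w) = sinh(2J)/(cosh(2J) + cosh(2w)) for every real w; consequently sup_w |A'(w)| = |tanh(J)| = |1−2p|, and A is Lipschitz with constant |1−2p|: |A(u) − A(v)| ≤ |1−2p|·|u − v| for all real u, v. -/

import Mathlib

/-- `A` is differentiable with `A'(w) = sinh(2J)/(cosh(2J) + cosh(2w))`;
consequently `sup_w |A'(w)| = |tanh(J)| = |1−2p|`, and `A` is Lipschitz with constant
`|1−2p|`: `|A(u) − A(v)| ≤ |1−2p|·|u − v|` for all real `u, v`. -/
theorem stmt_3 (p : ℝ) (hp0 : 0 < p) (hp1 : p < 1)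
    (J : ℝ) (hJ : J = (1 / 2) * Real.log ((1 - p) / p))
    (A : ℝ → ℝ)
    (hA : ∀ u, A u = (1 / 2) * Real.log (Real.cosh (u + J) / Real.cosh (u - J))) :
    (∀ w : ℝ,
      HasDerivAt A (Real.sinh (2 * J) / (Real.cosh (2 * J) + Real.cosh (2 * w))) w)
    ∧ (⨆ w : ℝ, |deriv A w|) = |Real.tanh J|
    ∧ |Real.tanh J| = |1 - 2 * p|
    ∧ ∀ u v : ℝ, |A u - A v| ≤ |1 - 2 * p| * |u - v| := by
  have hAfun : A = fun u => (1/2) * (Real.log (Real.cosh (u + J)) - Real.log (Real.cosh (u - J))) := by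
    funext u
    rw [hA u, Real.log_div (Real.cosh_pos _).ne' (Real.cosh_pos _).ne']
  -- key algebraic identity
  have key : ∀ w : ℝ, Real.sinh (2*J) / (Real.cosh (2*J) + Real.cosh (2*w))
      = (1/2) * (Real.sinh (w+J)/Real.cosh (w+J) - Real.sinh (w-J)/Real.cosh (w-J)) := by
    intro w
    have ha := (Real.cosh_pos (w+J)).ne'
    have hb := (Real.cosh_pos (w-J)).ne'
    have hD : Real.cosh (2*J) + Real.cosh (2*w)
        = 2 * (Real.cosh (w+J) * Real.cosh (w-J)) := by
      rw [Real.cosh_add, Real.cosh_sub, Real.cosh_two_mul, Real.cosh_two_mul]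
      linear_combination (1 - 2*Real.cosh J^2) * Real.cosh_sq w + (-2*Real.sinh w^2 - 1) * Real.cosh_sq J
    have hN : Real.sinh (2*J)
        = Real.sinh (w+J) * Real.cosh (w-J) - Real.sinh (w-J) * Real.cosh (w+J) := by
      rw [Real.sinh_add, Real.sinh_sub, Real.cosh_add, Real.cosh_sub, Real.sinh_two_mul]
      linear_combination (-(2*Real.sinh J*Real.cosh J)) * Real.cosh_sq w
    rw [hD, hN]
    field_simp
  have hderiv : ∀ w : ℝ,
      HasDerivAt A (Real.sinh (2 * J) / (Real.cosh (2 * J) + Real.cosh (2 * w))) w := by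
    intro w
    have h1 : HasDerivAt (fun u : ℝ => Real.cosh (u + J)) (Real.sinh (w + J)) w := by
      simpa [Function.comp_def] using (Real.hasDerivAt_cosh (w+J)).comp w ((hasDerivAt_id w).add_const J)
    have h2 : HasDerivAt (fun u : ℝ => Real.cosh (u - J)) (Real.sinh (w - J)) w := by
      simpa [Function.comp_def] using (Real.hasDerivAt_cosh (w-J)).comp w ((hasDerivAt_id w).sub_const J)
    have hl1 := h1.log (Real.cosh_pos _).ne'
    have hl2 := h2.log (Real.cosh_pos _).ne'
    have := ((hl1.sub hl2).const_mul (1/2 : ℝ))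
    rw [hAfun, key w]
    exact this
  have hcJ := Real.cosh_pos J
  have htanh_eq : Real.tanh J = Real.sinh (2*J) / (Real.cosh (2*J) + 1) := by
    have h2 : Real.cosh (2*J) + 1 = 2 * Real.cosh J ^ 2 := by
      rw [Real.cosh_two_mul]; linear_combination -Real.cosh_sq J
    rw [Real.tanh_eq_sinh_div_cosh, Real.sinh_two_mul, h2]
    field_simp
  have hDpos : ∀ w : ℝ, 0 < Real.cosh (2*J) + Real.cosh (2*w) := fun w => by
    have := Real.cosh_pos (2*J); have := Real.cosh_pos (2*w); linarith
  have hbound : ∀ w : ℝ, |deriv A w| ≤ |Real.tanh J| := by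
    intro w
    rw [(hderiv w).deriv, htanh_eq, abs_div, abs_div,
      abs_of_pos (hDpos w), abs_of_pos (by nlinarith [Real.cosh_pos (2*J)] : (0:ℝ) < Real.cosh (2*J) + 1)]
    apply div_le_div_of_nonneg_left (abs_nonneg _) (by nlinarith [Real.cosh_pos (2*J)])
    have := Real.one_le_cosh (2*w)
    linarith
  have hd0 : |deriv A 0| = |Real.tanh J| := by
    rw [(hderiv 0).deriv, htanh_eq]
    norm_num
  have hsup : (⨆ w : ℝ, |deriv A w|) = |Real.tanh J| := by
    apply le_antisymm (ciSup_le hbound)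
    rw [← hd0]
    exact le_ciSup ⟨|Real.tanh J|, fun x ⟨w, hw⟩ => hw ▸ hbound w⟩ 0
  have htp : Real.tanh J = 1 - 2*p := by
    have hq : (0:ℝ) < (1-p)/p := div_pos (by linarith) hp0
    have hx : Real.exp J ^ 2 = (1-p)/p := by
      rw [← Real.exp_nat_mul]
      push_cast
      rw [hJ, show (2:ℝ) * ((1/2) * Real.log ((1-p)/p)) = Real.log ((1-p)/p) by ring,
        Real.exp_log hq]
    have he := Real.exp_pos J
    rw [Real.tanh_eq_sinh_div_cosh, Real.sinh_eq, Real.cosh_eq, Real.exp_neg]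
    have hx' : p * Real.exp J ^ 2 = 1 - p := by
      rw [hx]; field_simp
    rw [div_eq_iff (by positivity : ((Real.exp J + (Real.exp J)⁻¹)/2 : ℝ) ≠ 0)]
    field_simp
    linear_combination 2 * hx'
  constructor
  · exact hderiv
  refine ⟨hsup, by rw [htp], ?_⟩
  intro u v
  have hb2 : ∀ x ∈ (Set.univ : Set ℝ), ‖deriv A x‖ ≤ |1 - 2*p| := by
    intro x _
    rw [Real.norm_eq_abs, ← htp]
    exact hbound x
  have := Convex.norm_image_sub_le_of_norm_deriv_le (s := Set.univ) (f := A)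
    (fun x _ => (hderiv x).differentiableAt) hb2
    convex_univ (Set.mem_univ v) (Set.mem_univ u)
  simpa [Real.norm_eq_abs, abs_sub_comm] using this
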